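/- Define α_1(β) = 1 and, for d ≥ 2, α_d(β) = (α_{d−1}(β))^7 / (2(1−β)^{d−1} − 1)^3. Then for all d ≥ 1 and all β ∈ [0, 24^{−d}], α_d(β) ≤ e^{2·24^{d−1}·β}. -/

import Mathlib

/-- `α_1(β) = 1` and `α_d(β) = α_{d-1}(β)^7 / (2(1-β)^{d-1} - 1)^3` for `d ≥ 2`. -/
noncomputable def alphaFn : ℕ → ℝ → ℝ
  | 0, _ => 1
  | 1, _ => 1
  | (d + 2), β => (alphaFn (d + 1) β) ^ 7 / (2 * (1 - β) ^ (d + 1) - 1) ^ 3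

lemma exp_neg_two_le (x : ℝ) (hx0 : 0 ≤ x) (hx : x ≤ 1 / 2) :
    Real.exp (-(2 * x)) ≤ 1 - x := by
  have h1 : (1 : ℝ) + 2 * x ≤ Real.exp (2 * x) := by linarith [Real.add_one_le_exp (2 * x)]
  have h2 : (0 : ℝ) < 1 + 2 * x := by linarith
  have h3 : Real.exp (-(2 * x)) = (Real.exp (2 * x))⁻¹ := Real.exp_neg _
  rw [h3]
  have h4 : (Real.exp (2 * x))⁻¹ ≤ (1 + 2 * x)⁻¹ := by
    apply inv_anti₀ h2 h1
  refine h4.trans ?_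
  rw [inv_le_iff_one_le_mul₀ h2]
  nlinarith

lemma aux_key (d : ℕ) (hd : 1 ≤ d) (β : ℝ) (h0 : 0 ≤ β) (hβ : β ≤ 1 / 24 ^ d) :
    0 ≤ alphaFn d β ∧ alphaFn d β ≤ Real.exp (2 * 24 ^ (d - 1) * β) := by
  induction d, hd using Nat.le_induction with
  | base =>
    refine ⟨by norm_num [alphaFn], ?_⟩
    simp only [alphaFn]
    apply Real.one_le_exp
    positivity
  | succ n hn IH =>
    have h24 : (0:ℝ) < 24 ^ n := by positivity
    have hβn : β ≤ 1 / 24 ^ n := by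
      refine hβ.trans ?_
      apply one_div_le_one_div_of_le h24
      exact pow_le_pow_right₀ (by norm_num) (Nat.le_succ n)
    obtain ⟨hpos, hle⟩ := IH hβn
    have hn24 : (n : ℝ) ≤ 24 ^ n := by
      exact_mod_cast (Nat.lt_pow_self (by norm_num : 1 < 24) : n < 24 ^ n).le
    have hnb : (n : ℝ) * β ≤ 1 / 24 := by
      have h1 : (n : ℝ) * β ≤ (n : ℝ) * (1 / 24 ^ (n + 1)) := by
        apply mul_le_mul_of_nonneg_left hβ (Nat.cast_nonneg n)
      have h2 : (n : ℝ) * (1 / 24 ^ (n + 1)) ≤ 1 / 24 := by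
        rw [pow_succ, mul_one_div, div_le_div_iff₀ (by positivity) (by norm_num)]
        nlinarith
      linarith
    have h1le : (1 : ℝ) ≤ 24 ^ n := by
      calc (1:ℝ) = 24 ^ 0 := by norm_num
        _ ≤ 24 ^ n := pow_le_pow_right₀ (by norm_num) (Nat.zero_le n)
    have hβ1 : β ≤ 1 := hβn.trans (by rw [div_le_one h24]; exact h1le)
    have hbern : 1 - (n : ℝ) * β ≤ (1 - β) ^ n := by
      have hb := one_add_mul_le_pow (a := -β) (by linarith) n
      calc 1 - (n:ℝ) * β = 1 + n * (-β) := by ring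
        _ ≤ (1 + -β) ^ n := hb
        _ = (1 - β) ^ n := by ring_nf
    have hden : Real.exp (-(2 * (2 * n * β))) ≤ 2 * (1 - β) ^ n - 1 := by
      have h1 : Real.exp (-(2 * (2 * n * β))) ≤ 1 - 2 * n * β := by
        apply exp_neg_two_le
        · positivity
        · nlinarith
      nlinarith
    have hdenpos : 0 < 2 * (1 - β) ^ n - 1 := lt_of_lt_of_le (Real.exp_pos _) hden
    obtain ⟨m, rfl⟩ : ∃ m, n = m + 1 := ⟨n - 1, (Nat.succ_pred_eq_of_pos hn).symm⟩
    have hunfold : alphaFn (m + 2) β =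
        (alphaFn (m + 1) β) ^ 7 / (2 * (1 - β) ^ (m + 1) - 1) ^ 3 := rfl
    constructor
    · rw [hunfold]
      exact div_nonneg (pow_nonneg hpos 7) (pow_nonneg hdenpos.le 3)
    · rw [hunfold]
      have hA : alphaFn (m + 1) β ^ 7 ≤ Real.exp (2 * 24 ^ m * β) ^ 7 := by
        apply pow_le_pow_left₀ hpos
        simpa using hle
      have hB : Real.exp (-(2 * (2 * (m + 1 : ℕ) * β))) ^ 3 ≤ (2 * (1 - β) ^ (m + 1) - 1) ^ 3 := by
        apply pow_le_pow_left₀ (Real.exp_pos _).le hden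
      have hdiv : alphaFn (m + 1) β ^ 7 / (2 * (1 - β) ^ (m + 1) - 1) ^ 3 ≤
          Real.exp (2 * 24 ^ m * β) ^ 7 / Real.exp (-(2 * (2 * (m + 1 : ℕ) * β))) ^ 3 := by
        apply div_le_div₀ (by positivity) hA (by positivity) hB
      refine hdiv.trans ?_
      rw [← Real.exp_nat_mul, ← Real.exp_nat_mul, ← Real.exp_sub, Real.exp_le_exp]
      push_cast
      have hm24 : (m : ℝ) + 1 ≤ 24 ^ m := by
        exact_mod_cast (Nat.lt_pow_self (by norm_num : 1 < 24) : m < 24 ^ m)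
      have h24m : (0:ℝ) < 24 ^ m := by positivity
      rw [pow_succ]
      nlinarith [mul_nonneg (by linarith : (0:ℝ) ≤ 24 ^ m - ((m:ℝ) + 1)) h0]

/-- For all `d ≥ 1` and `β ∈ [0, 24^{-d}]`, `α_d(β) ≤ e^{2·24^{d-1}·β}`. -/
theorem stmt5 (d : ℕ) (hd : 1 ≤ d) (β : ℝ) (h0 : 0 ≤ β) (hβ : β ≤ 1 / 24 ^ d) :
    alphaFn d β ≤ Real.exp (2 * 24 ^ (d - 1) * β) := by
  exact (aux_key d hd β h0 hβ).2
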